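/- arXiv:2108.09168 — 12 statements merged into one kernel-verified Lean document; each statement's English description precedes it below -/
import Mathlib

section
/- In a dually pseudo-complemented join semilattice with 0 and greatest element 1, for all elements a and b, (a + b)** = a** + b**, where * denotes dual pseudo-complementation and ** its double application. -/
/-- In a dually pseudo-complemented join semilattice with 0 and greatest element 1,
(a + b)** = a** + b**. -/
theorem stmt_0 (S : Type*) [SemilatticeSup S] [OrderBot S] [OrderTop S]
    (star : S → S)
    (hjoin : ∀ a : S, a ⊔ star a = ⊤)
    (hleast : ∀ a b : S, a ⊔ b = ⊤ → star a ≤ b)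
    (a b : S) :
    star (star (a ⊔ b)) = star (star a) ⊔ star (star b) := by
  have anti : ∀ x y : S, x ≤ y → star y ≤ star x := by
    intro x y h
    apply hleast
    rw [eq_top_iff, ← hjoin x]
    exact sup_le_sup h le_rfl
  apply le_antisymm
  · -- key: star(a⊔b) ⊔ (a** ⊔ b**) = ⊤
    apply hleast
    have h1 : star a ≤ b ⊔ star (a ⊔ b) := by
      apply hleast
      rw [eq_top_iff, ← hjoin (a ⊔ b)]
      simp [sup_assoc]
    have h2 : b ⊔ (star (a ⊔ b) ⊔ star (star a)) = ⊤ := by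
      rw [eq_top_iff, ← hjoin (star a)]
      refine sup_le ?_ ?_
      · exact le_trans h1 (sup_le_sup le_rfl le_sup_left)
      · exact le_sup_of_le_right le_sup_right
    have h3 : star b ≤ star (a ⊔ b) ⊔ star (star a) := hleast _ _ h2
    rw [eq_top_iff, ← hjoin (star b)]
    refine sup_le ?_ ?_
    · exact le_trans h3 (sup_le_sup le_rfl le_sup_left)
    · exact le_sup_of_le_right le_sup_right
  · refine sup_le ?_ ?_
    · exact anti _ _ (anti _ _ le_sup_left)
    · exact anti _ _ (anti _ _ le_sup_right)
end

section
/- Let L be an algebraic lattice whose join-semilattice of compact elements is dually pseudo-complemented, let 1 be the greatest element of L, and let a ∈ L with a ≠ 1. If 1 is join-irreducible in the interval [a,1], then the interval [a,1) = {d ∈ L : a ≤ d < 1} has a greatest element. -/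
open CompleteLattice

/-- If 1 is join-irreducible in the interval [a,1], then [a,1) has a greatest element. -/
theorem stmt_3 (L : Type*) [CompleteLattice L] [IsCompactlyGenerated L]
    (star : L → L)
    (hstar_cpt : ∀ c : L, IsCompactElement c → IsCompactElement (star c))
    (hjoin : ∀ c : L, IsCompactElement c → c ⊔ star c = ⊤)
    (hleast : ∀ c b : L, IsCompactElement c → IsCompactElement b → c ⊔ b = ⊤ → star c ≤ b)
    (a : L) (ha : a ≠ ⊤)
    (hji : ∀ x y : L, a ≤ x → a ≤ y → x ⊔ y = ⊤ → x = ⊤ ∨ y = ⊤) :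
    ∃ m : L, a ≤ m ∧ m < ⊤ ∧ ∀ d : L, a ≤ d → d < ⊤ → d ≤ m := by
  classical
  have hbot : IsCompactElement (⊥ : L) := by
    intro s hs
    exact fun hne _ _ _ => ⟨hne.some, hne.some_mem, bot_le⟩
  have htop : IsCompactElement (⊤ : L) := by
    have h := hjoin ⊥ hbot
    rw [bot_sup_eq] at h
    rw [← h]
    exact hstar_cpt ⊥ hbot
  set S : Set L := {c | IsCompactElement c ∧ a ⊔ c ≠ ⊤} with hS
  refine ⟨a ⊔ sSup S, le_sup_left, ?_, ?_⟩
  · -- a ⊔ sSup S < ⊤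
    rw [lt_top_iff_ne_top]
    intro hm
    have hle : (⊤ : L) ≤ sSup (insert a S) := by
      rw [sSup_insert, hm]
    obtain ⟨t, hts, htle⟩ := (isCompactElement_iff_exists_le_sSup_of_le_sSup L (⊤ : L)).mp htop _ hle
    -- show a ⊔ t.sup id ≠ ⊤ for t ⊆ insert a S
    have key : ∀ t : Finset L, ↑t ⊆ insert a S → a ⊔ t.sup id ≠ ⊤ := by
      intro t
      induction t using Finset.induction_on with
      | empty => intro _; simpa using ha
      | @insert c t' hc ih =>
        intro hsub htop'
        have hc' : c ∈ insert a S := hsub (by simp)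
        have ht' : ↑t' ⊆ insert a S := by
          intro x hx; exact hsub (by simp [hx])
        rw [Finset.sup_insert, ← sup_assoc] at htop'
        have : (a ⊔ c) ⊔ (a ⊔ t'.sup id) = ⊤ := by
          rw [sup_sup_sup_comm, sup_idem, ← sup_assoc] at *
          exact htop'
        rcases hji _ _ le_sup_left le_sup_left this with h | h
        · rcases hc' with rfl | hcS
          · rw [sup_idem] at h; exact ha h
          · exact hcS.2 h
        · exact ih ht' h
    have : a ⊔ t.sup id = ⊤ := top_le_iff.mp (le_trans htle le_sup_right)
    exact key t hts this
  · intro d had hd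
    rw [← sSup_compact_le_eq d]
    refine le_trans (sSup_le_sSup ?_) le_sup_right
    intro c hc
    refine ⟨hc.1, ?_⟩
    intro hact
    exact hd.ne (top_le_iff.mp (hact ▸ sup_le had hc.2))
end

section
/- Let L be an algebraic lattice whose join-semilattice of compact elements is dually pseudo-complemented, with greatest element 1. If c is compact, d ∈ L, and c + d = 1, then c* ≤ d, where c* is the dual pseudo-complement of c among compact elements. Consequently, c* is also the dual pseudo-complement of c in L. -/
open CompleteLattice

/-- If c is compact, d ∈ L, and c + d = 1, then c* ≤ d; consequently c* is the dual
pseudo-complement of c in L. -/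
theorem stmt_4 (L : Type*) [CompleteLattice L] [IsCompactlyGenerated L]
    (star : L → L)
    (hstar_cpt : ∀ c : L, IsCompactElement c → IsCompactElement (star c))
    (hjoin : ∀ c : L, IsCompactElement c → c ⊔ star c = ⊤)
    (hleast : ∀ c b : L, IsCompactElement c → IsCompactElement b → c ⊔ b = ⊤ → star c ≤ b)
    (c : L) (hc : IsCompactElement c) :
    (∀ d : L, c ⊔ d = ⊤ → star c ≤ d) ∧
      (c ⊔ star c = ⊤ ∧ ∀ d : L, c ⊔ d = ⊤ → star c ≤ d) := by
  classical
  have key : ∀ d : L, c ⊔ d = ⊤ → star c ≤ d := by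
    intro d hd
    set S : Set L := { x : L | IsCompactElement x ∧ x ≤ d } with hS
    have hdS : sSup S = d := sSup_compact_le_eq d
    have hle : star c ≤ sSup (insert c S) := by
      rw [sSup_insert, hdS, hd]; exact le_top
    obtain ⟨t, hts, ht⟩ := (isCompactElement_iff_exists_le_sSup_of_le_sSup L (star c)).mp (hstar_cpt c hc) (insert c S) hle
    -- e := sup of elements of t that lie in S
    set e : L := (t.filter (· ∈ S)).sup id with he
    have hecompact : IsCompactElement e := by
      apply isCompactElement_finsetSup
      intro x hx
      exact (Finset.mem_filter.mp hx).2.1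
    have hed : e ≤ d := by
      apply Finset.sup_le
      intro x hx
      exact (Finset.mem_filter.mp hx).2.2
    have htce : t.sup id ≤ c ⊔ e := by
      apply Finset.sup_le
      intro x hx
      rcases hts hx with rfl | hxS
      · exact le_sup_left
      · exact le_sup_of_le_right (Finset.le_sup (f := id) (Finset.mem_filter.mpr ⟨hx, hxS⟩))
    have hce : c ⊔ e = ⊤ := by
      apply top_unique
      rw [← hjoin c hc]
      exact sup_le le_sup_left (ht.trans htce)
    exact (hleast c e hc hecompact hce).trans hed
  exact ⟨key, hjoin c hc, key⟩
end

section
/- Let L be an algebraic lattice whose join-semilattice S of compact elements is dually pseudo-complemented, with greatest element 1. If the identity a = (a + c*) ⊓ (a + c**) holds for all compact a, c ∈ S (where ⊓ denotes greatest lower bound, when it exists), then it holds for all a ∈ L and compact c ∈ S. -/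
open CompleteLattice

lemma stmt_5_aux {L : Type*} [CompleteLattice L] [IsCompactlyGenerated L] {a d e : L}
    (hd : IsCompactElement d) (hde : d ≤ a ⊔ e) :
    ∃ b : L, IsCompactElement b ∧ b ≤ a ∧ d ≤ b ⊔ e := by
  classical
  have ha : a ⊔ e = sSup (insert e {c : L | IsCompactElement c ∧ c ≤ a}) := by
    rw [sSup_insert, sSup_compact_le_eq, sup_comm]
  obtain ⟨t, hts, hdt⟩ := (isCompactElement_iff_exists_le_sSup_of_le_sSup (k := d)).mp hd _ (ha ▸ hde)
  refine ⟨(t.filter (fun x => IsCompactElement x ∧ x ≤ a)).sup id,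
    isCompactElement_finsetSup _ (fun x hx => (Finset.mem_filter.mp hx).2.1),
    Finset.sup_le (fun x hx => (Finset.mem_filter.mp hx).2.2),
    hdt.trans (Finset.sup_le fun x hx => ?_)⟩
  rcases hts hx with rfl | hxT
  · exact le_sup_right
  · exact le_sup_of_le_left (Finset.le_sup (f := id) (Finset.mem_filter.mpr ⟨hx, hxT⟩))

/-- If a = (a + c*) ⊓ (a + c**) holds for all compact a, c, then it holds for all
a ∈ L and compact c. -/
theorem stmt_5 (L : Type*) [CompleteLattice L] [IsCompactlyGenerated L]
    (star : L → L)
    (hstar_cpt : ∀ c : L, IsCompactElement c → IsCompactElement (star c))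
    (hjoin : ∀ c : L, IsCompactElement c → c ⊔ star c = ⊤)
    (hleast : ∀ c b : L, IsCompactElement c → IsCompactElement b → c ⊔ b = ⊤ → star c ≤ b)
    (h : ∀ a c : L, IsCompactElement a → IsCompactElement c →
      (a ⊔ star c) ⊓ (a ⊔ star (star c)) = a) :
    ∀ a c : L, IsCompactElement c → (a ⊔ star c) ⊓ (a ⊔ star (star c)) = a := by
  classical
  intro a c hc
  refine le_antisymm ?_ (le_inf le_sup_left le_sup_left)
  rw [le_iff_compact_le_imp]
  intro d hd hdle
  obtain ⟨b₁, hb₁c, hb₁a, hdb₁⟩ := stmt_5_aux hd (hdle.trans inf_le_left)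
  obtain ⟨b₂, hb₂c, hb₂a, hdb₂⟩ := stmt_5_aux hd (hdle.trans inf_le_right)
  have hbc : IsCompactElement (b₁ ⊔ b₂) := by
    have := isCompactElement_finsetSup ({b₁, b₂} : Finset L) (f := id) (by
      intro x hx
      rcases Finset.mem_insert.mp hx with rfl | hx
      · exact hb₁c
      · exact (Finset.mem_singleton.mp hx) ▸ hb₂c)
    simpa using this
  have hb : d ≤ b₁ ⊔ b₂ := by
    have h1 : d ≤ (b₁ ⊔ b₂) ⊔ star c := hdb₁.trans (sup_le_sup_right le_sup_left _)
    have h2 : d ≤ (b₁ ⊔ b₂) ⊔ star (star c) := hdb₂.trans (sup_le_sup_right le_sup_right _)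
    calc d ≤ ((b₁ ⊔ b₂) ⊔ star c) ⊓ ((b₁ ⊔ b₂) ⊔ star (star c)) := le_inf h1 h2
    _ = b₁ ⊔ b₂ := h _ _ hbc hc
  exact hb.trans (sup_le hb₁a hb₂a)
end

section
/- Let L be an algebraic lattice whose join-semilattice of compact elements is dually pseudo-complemented, with greatest element 1. If a = (a + c*) ⊓ (a + c**) for every a ∈ L and compact c, then for every meet-irreducible element a ∈ L with a ≠ 1, the interval [a,1) has a greatest element. -/
open CompleteLattice

/-- If a = (a + c*) ⊓ (a + c**) for every a ∈ L and compact c, then for every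
meet-irreducible a ≠ 1, the interval [a,1) has a greatest element. -/
theorem stmt_6 (L : Type*) [CompleteLattice L] [IsCompactlyGenerated L]
    (star : L → L)
    (hstar_cpt : ∀ c : L, IsCompactElement c → IsCompactElement (star c))
    (hjoin : ∀ c : L, IsCompactElement c → c ⊔ star c = ⊤)
    (hleast : ∀ c b : L, IsCompactElement c → IsCompactElement b → c ⊔ b = ⊤ → star c ≤ b)
    (h : ∀ a c : L, IsCompactElement c → (a ⊔ star c) ⊓ (a ⊔ star (star c)) = a)
    (a : L) (ha : a ≠ ⊤)
    (hmi : ∀ x y : L, a = x ⊓ y → a = x ∨ a = y) :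
    ∃ m : L, a ≤ m ∧ m < ⊤ ∧ ∀ d : L, a ≤ d → d < ⊤ → d ≤ m := by
  classical
  -- ⊥ is compact
  have hbot : IsCompactElement (⊥ : L) := by
    intro s hs
    intro hne _ _ _
    exact ⟨hne.some, hne.some_mem, bot_le⟩
  -- ⊤ is compact: star ⊥ = ⊤
  have hstarbot : star (⊥ : L) = ⊤ := by
    have := hjoin ⊥ hbot
    rwa [bot_sup_eq] at this
  have htop : IsCompactElement (⊤ : L) := hstarbot ▸ hstar_cpt ⊥ hbot
  -- dichotomy from meet-irreducibility
  have dich : ∀ c : L, IsCompactElement c → star c ≤ a ∨ star (star c) ≤ a := by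
    intro c hc
    rcases hmi _ _ (h a c hc).symm with h1 | h1
    · left
      have : star c ≤ a ⊔ star c := le_sup_right
      rwa [← h1] at this
    · right
      have : star (star c) ≤ a ⊔ star (star c) := le_sup_right
      rwa [← h1] at this
  -- the key closure property
  have key : ∀ x y : L, a ≤ x → a ≤ y → x ≠ ⊤ → y ≠ ⊤ → x ⊔ y ≠ ⊤ := by
    intro x y hax hay hx hy hxy
    -- write x and y as sups of compacts
    have hxS : x = sSup {c : L | IsCompactElement c ∧ c ≤ x} := (sSup_compact_le_eq x).symm
    have hyS : y = sSup {c : L | IsCompactElement c ∧ c ≤ y} := (sSup_compact_le_eq y).symm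
    have hsup : (⊤ : L) ≤ sSup ({c : L | IsCompactElement c ∧ c ≤ x} ∪
        {c : L | IsCompactElement c ∧ c ≤ y}) := by
      rw [sSup_union, ← hxS, ← hyS, hxy]
    obtain ⟨t, hts, htle⟩ := (isCompactElement_iff_exists_le_sSup_of_le_sSup L ⊤).mp htop _ hsup
    set p : L := (t.filter (fun u => u ≤ x)).sup id with hp
    set q : L := (t.filter (fun u => ¬ u ≤ x)).sup id with hq
    have hmemc : ∀ u ∈ t, IsCompactElement u := by
      intro u hu
      rcases hts hu with h' | h' <;> exact h'.1
    have hpc : IsCompactElement p := by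
      apply isCompactElement_finsetSup
      intro u hu
      exact hmemc u (Finset.mem_filter.mp hu).1
    have hqc : IsCompactElement q := by
      apply isCompactElement_finsetSup
      intro u hu
      exact hmemc u (Finset.mem_filter.mp hu).1
    have hpx : p ≤ x := by
      apply Finset.sup_le
      intro u hu
      exact (Finset.mem_filter.mp hu).2
    have hqy : q ≤ y := by
      apply Finset.sup_le
      intro u hu
      obtain ⟨hut, hnx⟩ := Finset.mem_filter.mp hu
      rcases hts hut with h' | h'
      · exact absurd h'.2 hnx
      · exact h'.2
    have hpq : p ⊔ q = ⊤ := by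
      apply top_unique
      refine le_trans htle ?_
      apply Finset.sup_le
      intro u hu
      by_cases hux : u ≤ x
      · have h1 : u ≤ p := Finset.le_sup (f := id) (Finset.mem_filter.mpr ⟨hu, hux⟩)
        exact le_trans h1 le_sup_left
      · have h1 : u ≤ q := Finset.le_sup (f := id) (Finset.mem_filter.mpr ⟨hu, hux⟩)
        exact le_trans h1 le_sup_right
    -- p is "small": star (star p) ≤ a
    have hps : star (star p) ≤ a := by
      rcases dich p hpc with h' | h'
      · exact absurd (top_unique ((hjoin p hpc).symm.le.trans (sup_le hpx (h'.trans hax)))) hx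
      · exact h'
    -- star p ≤ q, hence star q ≤ star (star p) ≤ a
    have hspq : star p ≤ q := hleast p q hpc hqc hpq
    have hqssp : q ⊔ star (star p) = ⊤ :=
      top_unique ((hjoin (star p) (hstar_cpt p hpc)).symm.le.trans
        (sup_le_sup_right hspq _))
    have hsq : star q ≤ a :=
      (hleast q (star (star p)) hqc (hstar_cpt _ (hstar_cpt p hpc)) hqssp).trans hps
    exact hy (top_unique ((hjoin q hqc).symm.le.trans (sup_le hqy (hsq.trans hay))))
  -- the set of proper elements above a
  set D : Set L := {x : L | a ≤ x ∧ x ≠ ⊤} with hD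
  have haD : a ∈ D := ⟨le_rfl, ha⟩
  have hdir : DirectedOn (· ≤ ·) D := by
    rintro x ⟨hax, hx⟩ y ⟨hay, hy⟩
    exact ⟨x ⊔ y, ⟨le_trans hax le_sup_left, key x y hax hay hx hy⟩,
      le_sup_left, le_sup_right⟩
  refine ⟨sSup D, le_sSup haD, ?_, fun d had hd => le_sSup ⟨had, hd.ne⟩⟩
  rw [lt_top_iff_ne_top]
  intro hm
  obtain ⟨x, hxD, hx⟩ := (isCompactElement_iff_le_of_directed_sSup_le L ⊤).mp htop D
    ⟨a, haD⟩ hdir hm.ge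
  exact hxD.2 (top_unique hx)
end

section
/- Let L be an algebraic lattice whose join-semilattice of compact elements is dually pseudo-complemented, with greatest element 1. If for every completely meet-irreducible a ∈ L the element 1 is join-irreducible in the interval [a,1], then a = (a + c*) ⊓ (a + c**) for all compact a, c. -/
open CompleteLattice

private lemma botcpt {L : Type*} [CompleteLattice L] : IsCompactElement (⊥ : L) := by
  rw [isCompactElement_iff_exists_le_sSup_of_le_sSup]
  intro s _
  exact ⟨∅, by simp⟩

private lemma cpt_sup {L : Type*} [CompleteLattice L] {x y : L}
    (hx : IsCompactElement x) (hy : IsCompactElement y) : IsCompactElement (x ⊔ y) := by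
  rw [isCompactElement_iff_exists_le_sSup_of_le_sSup] at hx hy ⊢
  intro s hs
  obtain ⟨t1, ht1, hxt1⟩ := hx s (le_trans le_sup_left hs)
  obtain ⟨t2, ht2, hyt2⟩ := hy s (le_trans le_sup_right hs)
  classical
  exact ⟨t1 ∪ t2, by
    simp only [Finset.coe_union, Set.union_subset_iff]; exact ⟨ht1, ht2⟩,
    sup_le (hxt1.trans (Finset.sup_mono Finset.subset_union_left))
      (hyt2.trans (Finset.sup_mono Finset.subset_union_right))⟩

/-- In a compactly generated lattice, if `¬ b ≤ a` there is a completely meet-irreducible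
element above `a` not above `b`. -/
private lemma exists_cmi {L : Type*} [CompleteLattice L] [IsCompactlyGenerated L] {a b : L}
    (hba : ¬ b ≤ a) : ∃ m, a ≤ m ∧ ¬ b ≤ m ∧ ∀ X : Set L, m = sInf X → m ∈ X := by
  -- find a compact k ≤ b with ¬ k ≤ a
  obtain ⟨k, ⟨hk, hkb⟩, hka⟩ : ∃ k, (IsCompactElement k ∧ k ≤ b) ∧ ¬ k ≤ a := by
    by_contra hc
    push_neg at hc
    exact hba (by
      rw [← sSup_compact_le_eq b]
      exact sSup_le fun c hc' => hc c hc')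
  -- Zorn on the set of elements above a, not above k
  obtain ⟨m, ham, ⟨-, hkm⟩, hmax⟩ :
      ∃ m, a ≤ m ∧ Maximal (· ∈ {z : L | a ≤ z ∧ ¬ k ≤ z}) m := by
    apply zorn_le_nonempty₀
    · intro c hcs hchain y hyc
      refine ⟨sSup c, ⟨le_trans (hcs hyc).1 (le_sSup hyc), ?_⟩, fun z hz => le_sSup hz⟩
      intro hksup
      obtain ⟨x, hxc, hkx⟩ := (isCompactElement_iff_le_of_directed_sSup_le L k).mp hk c
        ⟨y, hyc⟩ hchain.directedOn hksup
      exact (hcs hxc).2 hkx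
    · exact ⟨le_refl a, hka⟩
  refine ⟨m, ham, fun hbm => hkm (hkb.trans hbm), ?_⟩
  intro X hX
  by_contra hmX
  -- every element of X is strictly above m, hence above k
  have : k ≤ sInf X := by
    apply _root_.le_sInf
    intro x hxX
    have hmx : m ≤ x := hX ▸ sInf_le hxX
    have hxne : m ≠ x := fun e => hmX (e ▸ hxX)
    by_contra hkx
    exact hxne (le_antisymm hmx (hmax ⟨ham.trans hmx, hkx⟩ hmx))
  exact hkm (hX ▸ this)

/-- If for every completely meet-irreducible a, 1 is join-irreducible in [a,1],
then a = (a + c*) ⊓ (a + c**) for all compact a, c. -/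
theorem stmt_7 (L : Type*) [CompleteLattice L] [IsCompactlyGenerated L]
    (star : L → L)
    (hstar_cpt : ∀ c : L, IsCompactElement c → IsCompactElement (star c))
    (hjoin : ∀ c : L, IsCompactElement c → c ⊔ star c = ⊤)
    (hleast : ∀ c b : L, IsCompactElement c → IsCompactElement b → c ⊔ b = ⊤ → star c ≤ b)
    (h : ∀ a : L, (∀ X : Set L, a = sInf X → a ∈ X) →
      ∀ x y : L, a ≤ x → a ≤ y → x ⊔ y = ⊤ → x = ⊤ ∨ y = ⊤) :
    ∀ a c : L, IsCompactElement a → IsCompactElement c →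
      (a ⊔ star c) ⊓ (a ⊔ star (star c)) = a := by
  intro a c ha hc
  have hc1 : IsCompactElement (star c) := hstar_cpt c hc
  have hc2 : IsCompactElement (star (star c)) := hstar_cpt _ hc1
  have htop : IsCompactElement (⊤ : L) := by
    rw [← hjoin c hc]; exact cpt_sup hc hc1
  -- c** ≤ c
  have hssc : star (star c) ≤ c := hleast (star c) c hc1 hc (sup_comm c (star c) ▸ hjoin c hc)
  refine le_antisymm ?_ (le_inf le_sup_left le_sup_left)
  by_contra hle
  obtain ⟨m, ham, hbm, hcmi⟩ := exists_cmi hle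
  -- m ⊔ c* and m ⊔ c** join to ⊤
  have hsup : (m ⊔ star c) ⊔ (m ⊔ star (star c)) = ⊤ := by
    rw [eq_top_iff, ← hjoin (star c) hc1]
    exact sup_le (le_trans (le_sup_right : star c ≤ m ⊔ star c) le_sup_left)
      (le_trans (le_sup_right : star (star c) ≤ m ⊔ star (star c)) le_sup_right)
  -- key: from m ⊔ x = ⊤ with x compact, find compact d ≤ m with x ⊔ d = ⊤
  have key : ∀ x : L, IsCompactElement x → m ⊔ x = ⊤ →
      ∃ d, IsCompactElement d ∧ d ≤ m ∧ x ⊔ d = ⊤ := by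
    intro x hx hmx
    set S : Set L := {z | ∃ d, (IsCompactElement d ∧ d ≤ m) ∧ z = x ⊔ d} with hS
    have hdirS : DirectedOn (· ≤ ·) S := by
      rintro _ ⟨d1, ⟨hd1, hd1m⟩, rfl⟩ _ ⟨d2, ⟨hd2, hd2m⟩, rfl⟩
      exact ⟨x ⊔ (d1 ⊔ d2), ⟨d1 ⊔ d2, ⟨cpt_sup hd1 hd2, sup_le hd1m hd2m⟩, rfl⟩,
        sup_le le_sup_left (le_trans le_sup_left le_sup_right),
        sup_le le_sup_left (le_trans le_sup_right le_sup_right)⟩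
    have hSsup : (⊤ : L) ≤ sSup S := by
      rw [← hmx]
      apply sup_le
      · conv_lhs => rw [← sSup_compact_le_eq m]
        apply _root_.sSup_le
        rintro d ⟨hd, hdm⟩
        exact le_trans le_sup_right (le_sSup ⟨d, ⟨hd, hdm⟩, rfl⟩)
      · exact le_trans le_sup_left (le_sSup ⟨⊥, ⟨botcpt (L:=L), bot_le⟩, rfl⟩)
    obtain ⟨_, ⟨d, ⟨hd, hdm⟩, rfl⟩, hled⟩ :=
      (isCompactElement_iff_le_of_directed_sSup_le L ⊤).mp htop S
        ⟨x ⊔ ⊥, ⟨⊥, ⟨botcpt (L:=L), bot_le⟩, rfl⟩⟩ hdirS hSsup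
    exact ⟨d, hd, hdm, top_unique hled⟩
  rcases h m hcmi (m ⊔ star c) (m ⊔ star (star c)) le_sup_left le_sup_left hsup with h1 | h1
  · -- m ⊔ c* = ⊤ : then c** ≤ m, so a ⊔ c** ≤ m
    obtain ⟨d, hd, hdm, hxd⟩ := key (star c) hc1 h1
    have : star (star c) ≤ m := le_trans (hleast (star c) d hc1 hd hxd) hdm
    exact hbm (le_trans inf_le_right (sup_le ham this))
  · -- m ⊔ c** = ⊤ : then c ⊔ d = ⊤ for some compact d ≤ m, so c* ≤ m
    obtain ⟨d, hd, hdm, hxd⟩ := key (star (star c)) hc2 h1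
    have hcd : c ⊔ d = ⊤ := top_unique (hxd ▸ sup_le_sup_right hssc d)
    have : star c ≤ m := le_trans (hleast c d hc hd hcd) hdm
    exact hbm (le_trans inf_le_left (sup_le ham this))
end

section
/- Let L be an algebraic lattice whose join-semilattice of compact elements is dually pseudo-complemented, with greatest element 1. The following are equivalent: (i) a = (a + c*) ⊓ (a + c**) for all compact a, c; (ii) a = (a + c*) ⊓ (a + c**) for all a ∈ L and compact c; (iii) whenever a ∈ L \ {1} is meet-irreducible, the interval [a,1) has a greatest element; (iv) whenever a ∈ L is completely meet-irreducible, 1 is join-irreducible in [a,1]. -/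
open CompleteLattice

section Aux
variable {L : Type*} [CompleteLattice L]

private lemma cptBot : IsCompactElement (⊥ : L) := fun _ _ ⟨y, hy⟩ _ _ _ => ⟨y, hy, bot_le⟩

private lemma cptSup {a b : L} (ha : IsCompactElement a) (hb : IsCompactElement b) :
    IsCompactElement (a ⊔ b) := by
  rw [isCompactElement_iff_le_of_directed_sSup_le] at *
  intro s hne hdir hsup
  obtain ⟨x, hxs, hax⟩ := ha s hne hdir (le_sup_left.trans hsup)
  obtain ⟨y, hys, hby⟩ := hb s hne hdir (le_sup_right.trans hsup)
  obtain ⟨z, hzs, hxz, hyz⟩ := hdir x hxs y hys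
  exact ⟨z, hzs, sup_le (hax.trans hxz) (hby.trans hyz)⟩

/-- Zorn: a maximal element above `a` avoiding the compact `c`; it is
"completely meet-irreducible" in the sense that everything strictly above it is above `c`. -/
private lemma exists_cmi_s8 {c a : L} (hc : IsCompactElement c) (hca : ¬ c ≤ a) :
    ∃ p, a ≤ p ∧ ¬ c ≤ p ∧ ∀ x, p < x → c ≤ x := by
  have ih : ∀ ch ⊆ {p : L | a ≤ p ∧ ¬ c ≤ p}, IsChain (· ≤ ·) ch → ∀ y ∈ ch,
      ∃ ub ∈ {p : L | a ≤ p ∧ ¬ c ≤ p}, ∀ z ∈ ch, z ≤ ub := by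
    intro ch hchs hch y hy
    refine ⟨sSup ch, ⟨(hchs hy).1.trans (le_sSup hy), fun hcs => ?_⟩, fun z hz => le_sSup hz⟩
    obtain ⟨z, hzch, hcz⟩ := (isCompactElement_iff_le_of_directed_sSup_le L c).mp hc ch
      ⟨y, hy⟩ hch.directedOn hcs
    exact (hchs hzch).2 hcz
  obtain ⟨p, hap, hmax⟩ := zorn_le_nonempty₀ {p : L | a ≤ p ∧ ¬ c ≤ p} ih a ⟨le_rfl, hca⟩
  refine ⟨p, hap, hmax.prop.2, fun x hpx => ?_⟩
  by_contra hcx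
  replace hpx : p < x := hpx
  exact hpx.not_ge (hmax.2 ⟨hmax.prop.1.trans hpx.le, hcx⟩ hpx.le)

variable [IsCompactlyGenerated L]

/-- Compact approximation: a compact element below `a ⊔ k` is below `u ⊔ k` for some
compact `u ≤ a`. -/
private lemma keyApprox {a k x : L} (hx : IsCompactElement x) (hxk : x ≤ a ⊔ k) :
    ∃ u, IsCompactElement u ∧ u ≤ a ∧ x ≤ u ⊔ k := by
  set D : Set L := (· ⊔ k) '' {u : L | IsCompactElement u ∧ u ≤ a} with hD
  have hsup : sSup D = a ⊔ k := by
    apply le_antisymm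
    · exact sSup_le (by rintro _ ⟨u, ⟨-, hu⟩, rfl⟩; exact sup_le (hu.trans le_sup_left) le_sup_right)
    · refine sup_le ?_ (le_sSup_of_le ⟨⊥, ⟨cptBot, bot_le⟩, rfl⟩ le_sup_right)
      conv_lhs => rw [← sSup_compact_le_eq a]
      exact sSup_le fun u hu => le_sSup_of_le ⟨u, hu, rfl⟩ le_sup_left
  have hdir : DirectedOn (· ≤ ·) D := by
    rintro _ ⟨u, hu, rfl⟩ _ ⟨v, hv, rfl⟩
    exact ⟨(u ⊔ v) ⊔ k, ⟨u ⊔ v, ⟨cptSup hu.1 hv.1, sup_le hu.2 hv.2⟩, rfl⟩,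
      sup_le (le_sup_left.trans le_sup_left) le_sup_right,
      sup_le (le_sup_right.trans le_sup_left) le_sup_right⟩
  obtain ⟨_, ⟨u, hu, rfl⟩, hxu⟩ := (isCompactElement_iff_le_of_directed_sSup_le L x).mp hx D
    ⟨⊥ ⊔ k, ⟨⊥, ⟨cptBot, bot_le⟩, rfl⟩⟩ hdir (hsup ▸ hxk)
  exact ⟨u, hu.1, hu.2, hxu⟩

/-- If `x ⊔ y = ⊤` and `⊤` is compact, there are compacts `u ≤ x`, `v ≤ y` with `u ⊔ v = ⊤`. -/
private lemma keySplit {x y : L} (htop : IsCompactElement (⊤ : L)) (hxy : x ⊔ y = ⊤) :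
    ∃ u v, IsCompactElement u ∧ IsCompactElement v ∧ u ≤ x ∧ v ≤ y ∧ u ⊔ v = ⊤ := by
  set D : Set L := Set.image2 (· ⊔ ·) {u : L | IsCompactElement u ∧ u ≤ x}
    {v : L | IsCompactElement v ∧ v ≤ y} with hD
  have hsup : sSup D = ⊤ := by
    rw [← hxy]
    apply le_antisymm
    · exact sSup_le (by
        rintro _ ⟨u, hu, v, hv, rfl⟩
        exact sup_le (hu.2.trans le_sup_left) (hv.2.trans le_sup_right))
    · refine sup_le ?_ ?_
      · conv_lhs => rw [← sSup_compact_le_eq x]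
        exact sSup_le fun u hu =>
          le_sSup_of_le ⟨u, hu, ⊥, ⟨cptBot, bot_le⟩, rfl⟩ le_sup_left
      · conv_lhs => rw [← sSup_compact_le_eq y]
        exact sSup_le fun v hv =>
          le_sSup_of_le ⟨⊥, ⟨cptBot, bot_le⟩, v, hv, rfl⟩ le_sup_right
  have hdir : DirectedOn (· ≤ ·) D := by
    rintro _ ⟨u₁, hu₁, v₁, hv₁, rfl⟩ _ ⟨u₂, hu₂, v₂, hv₂, rfl⟩
    refine ⟨(u₁ ⊔ u₂) ⊔ (v₁ ⊔ v₂),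
      ⟨u₁ ⊔ u₂, ⟨cptSup hu₁.1 hu₂.1, sup_le hu₁.2 hu₂.2⟩,
       v₁ ⊔ v₂, ⟨cptSup hv₁.1 hv₂.1, sup_le hv₁.2 hv₂.2⟩, rfl⟩,
      sup_le (le_sup_left.trans le_sup_left) (le_sup_left.trans le_sup_right),
      sup_le (le_sup_right.trans le_sup_left) (le_sup_right.trans le_sup_right)⟩
  obtain ⟨_, ⟨u, hu, v, hv, rfl⟩, htuv⟩ :=
    (isCompactElement_iff_le_of_directed_sSup_le L (⊤ : L)).mp htop D
      ⟨⊥ ⊔ ⊥, ⟨⊥, ⟨cptBot, bot_le⟩, ⊥, ⟨cptBot, bot_le⟩, rfl⟩⟩ hdir hsup.ge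
  exact ⟨u, v, hu.1, hv.1, hu.2, hv.2, top_unique htuv⟩

end Aux

/-- Equivalence of the four conditions characterizing the WEML on algebraic lattices. -/
theorem stmt_8 (L : Type*) [CompleteLattice L] [IsCompactlyGenerated L]
    (star : L → L)
    (hstar_cpt : ∀ c : L, IsCompactElement c → IsCompactElement (star c))
    (hjoin : ∀ c : L, IsCompactElement c → c ⊔ star c = ⊤)
    (hleast : ∀ c b : L, IsCompactElement c → IsCompactElement b → c ⊔ b = ⊤ → star c ≤ b) :
    List.TFAE
      [∀ a c : L, IsCompactElement a → IsCompactElement c →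
          (a ⊔ star c) ⊓ (a ⊔ star (star c)) = a,
       ∀ a c : L, IsCompactElement c → (a ⊔ star c) ⊓ (a ⊔ star (star c)) = a,
       ∀ a : L, a ≠ ⊤ → (∀ x y : L, a = x ⊓ y → a = x ∨ a = y) →
          ∃ m : L, a ≤ m ∧ m < ⊤ ∧ ∀ d : L, a ≤ d → d < ⊤ → d ≤ m,
       ∀ a : L, (∀ X : Set L, a = sInf X → a ∈ X) →
          ∀ x y : L, a ≤ x → a ≤ y → x ⊔ y = ⊤ → x = ⊤ ∨ y = ⊤] := by
  have htop : IsCompactElement (⊤ : L) := by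
    have h := hjoin ⊥ cptBot
    rw [bot_sup_eq] at h
    exact h ▸ hstar_cpt ⊥ cptBot
  tfae_have 2 → 1
  | h2, a, c, _, hc => h2 a c hc
  tfae_have 1 → 2
  | h1, a, c, hc => by
    refine le_antisymm ?_ (le_inf le_sup_left le_sup_left)
    rw [le_iff_compact_le_imp]
    intro x hx hxm
    obtain ⟨u₁, hu₁c, hu₁a, hxu₁⟩ := keyApprox hx (le_trans hxm inf_le_left)
    obtain ⟨u₂, hu₂c, hu₂a, hxu₂⟩ := keyApprox hx (le_trans hxm inf_le_right)
    have hu : IsCompactElement (u₁ ⊔ u₂) := cptSup hu₁c hu₂c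
    have : x ≤ ((u₁ ⊔ u₂) ⊔ star c) ⊓ ((u₁ ⊔ u₂) ⊔ star (star c)) :=
      le_inf (hxu₁.trans (sup_le_sup_right le_sup_left _))
        (hxu₂.trans (sup_le_sup_right le_sup_right _))
    rw [h1 (u₁ ⊔ u₂) c hu hc] at this
    exact this.trans (sup_le hu₁a hu₂a)
  tfae_have 2 → 3
  | h2, a, ha, hmi => by
    -- dichotomy
    have dich : ∀ c : L, IsCompactElement c → star c ≤ a ∨ star (star c) ≤ a := by
      intro c hc
      rcases hmi _ _ (h2 a c hc).symm with h | h
      · exact Or.inl (sup_eq_left.mp h.symm)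
      · exact Or.inr (sup_eq_left.mp h.symm)
    -- join-irreducibility over a
    have J : ∀ x y : L, a ≤ x → a ≤ y → x ⊔ y = ⊤ → x = ⊤ ∨ y = ⊤ := by
      intro x y hax hay hxy
      obtain ⟨u, v, hu, hv, hux, hvy, huv⟩ := keySplit htop hxy
      have hvu : star v ≤ u := hleast v u hv hu (sup_comm u v ▸ huv)
      rcases dich v hv with h | h
      · exact Or.inr (top_unique ((hjoin v hv) ▸ sup_le hvy (h.trans hay)))
      · exact Or.inl (top_unique ((hjoin (star v) (hstar_cpt v hv)) ▸
          sup_le (hvu.trans hux) (h.trans hax)))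
    -- a compact element joining a to the top
    obtain ⟨e, he, hea⟩ : ∃ e : L, IsCompactElement e ∧ a ⊔ e = ⊤ := by
      obtain ⟨c, hc, -, hca⟩ : ∃ c : L, IsCompactElement c ∧ c ≤ ⊤ ∧ ¬ c ≤ a := by
        by_contra hcon
        push_neg at hcon
        exact ha (top_unique (le_iff_compact_le_imp.mpr fun c hc hct => hcon c hc hct))
      rcases dich c hc with h | h
      · exact ⟨c, hc, top_unique (by
          rw [← hjoin c hc]; exact sup_le le_sup_right (h.trans le_sup_left))⟩
      · exact ⟨star c, hstar_cpt c hc, top_unique (by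
          rw [← hjoin (star c) (hstar_cpt c hc)]
          exact sup_le le_sup_right (h.trans le_sup_left))⟩
    -- the greatest element of [a, ⊤)
    set D : Set L := {d : L | a ≤ d ∧ d ≠ ⊤} with hDdef
    have haD : a ∈ D := ⟨le_rfl, ha⟩
    have hdir : DirectedOn (· ≤ ·) D := by
      rintro x ⟨hax, hx⟩ y ⟨hay, hy⟩
      refine ⟨x ⊔ y, ⟨hax.trans le_sup_left, fun hc => ?_⟩, le_sup_left, le_sup_right⟩
      rcases J x y hax hay hc with h | h
      exacts [hx h, hy h]
    refine ⟨sSup D, le_sSup haD, lt_top_iff_ne_top.mpr fun hm => ?_,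
      fun d had hd => le_sSup ⟨had, hd.ne⟩⟩
    obtain ⟨d, hdD, hed⟩ := (isCompactElement_iff_le_of_directed_sSup_le L e).mp he D
      ⟨a, haD⟩ hdir (hm ▸ le_top)
    exact hdD.2 (top_unique (hea ▸ sup_le hdD.1 hed))
  tfae_have 3 → 4
  | h3, a, hcmi, x, y, hax, hay, hxy => by
    have ha : a ≠ ⊤ := fun h => by
      have := hcmi ∅ (by rw [sInf_empty, h])
      exact this
    have hmi : ∀ u v : L, a = u ⊓ v → a = u ∨ a = v := by
      intro u v huv
      have := hcmi {u, v} (by rw [sInf_pair]; exact huv)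
      rcases this with h | h
      · exact Or.inl h
      · exact Or.inr h
    obtain ⟨m, ham, hm, hgreat⟩ := h3 a ha hmi
    by_contra hcon
    push_neg at hcon
    have hxm := hgreat x hax (lt_top_iff_ne_top.mpr hcon.1)
    have hym := hgreat y hay (lt_top_iff_ne_top.mpr hcon.2)
    exact hm.ne (top_unique (hxy ▸ sup_le hxm hym))
  tfae_have 4 → 2
  | h4, a, c, hc => by
    refine le_antisymm ?_ (le_inf le_sup_left le_sup_left)
    rw [le_iff_compact_le_imp]
    intro x hx hxm
    by_contra hxa
    obtain ⟨p, hap, hxp, hpmax⟩ := exists_cmi_s8 hx hxa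
    have hpcmi : ∀ X : Set L, p = sInf X → p ∈ X := by
      intro X hX
      by_contra hpX
      refine hxp (hX ▸ le_sInf fun z hz => hpmax z (lt_of_le_of_ne ?_ ?_))
      · exact hX ▸ sInf_le hz
      · rintro rfl; exact hpX hz
    have hsplit : p ⊔ c = ⊤ ∨ p ⊔ star c = ⊤ := by
      refine h4 p hpcmi (p ⊔ c) (p ⊔ star c) le_sup_left le_sup_left ?_
      rw [sup_sup_sup_comm, sup_idem, hjoin c hc]
      exact sup_top_eq p
    have key : star c ≤ p ∨ star (star c) ≤ p := by
      rcases hsplit with h | h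
      · obtain ⟨u, v, hu, hv, hup, hvc, huv⟩ := keySplit htop h
        have : c ⊔ u = ⊤ := top_unique (by
          rw [← huv]; exact sup_le le_sup_right (hvc.trans le_sup_left))
        exact Or.inl ((hleast c u hc hu this).trans hup)
      · obtain ⟨u, v, hu, hv, hup, hvc, huv⟩ := keySplit htop h
        have : star c ⊔ u = ⊤ := top_unique (huv ▸ sup_le le_sup_right (hvc.trans le_sup_left))
        exact Or.inr ((hleast (star c) u (hstar_cpt c hc) hu this).trans hup)
    rcases key with h | h
    · exact hxp (hxm.trans (inf_le_left.trans (sup_le hap h)))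
    · exact hxp (hxm.trans (inf_le_right.trans (sup_le hap h)))
  tfae_finish
end

section
/- Let L be an algebraic lattice whose join-semilattice of compact elements is dually pseudo-complemented, with greatest element 1. If a = (a + c) ⊓ (a + c*) for every a ∈ L and every compact c, then every meet-irreducible a ∈ L with a ≠ 1 satisfies [a,1] = {a,1}, i.e., a is a coatom. -/
open CompleteLattice

/-- If a = (a + c) ⊓ (a + c*) for every a ∈ L and compact c, then every
meet-irreducible a ≠ 1 is a coatom. -/
theorem stmt_9 (L : Type*) [CompleteLattice L] [IsCompactlyGenerated L]
    (star : L → L)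
    (hstar_cpt : ∀ c : L, IsCompactElement c → IsCompactElement (star c))
    (hjoin : ∀ c : L, IsCompactElement c → c ⊔ star c = ⊤)
    (hleast : ∀ c b : L, IsCompactElement c → IsCompactElement b → c ⊔ b = ⊤ → star c ≤ b)
    (h : ∀ a c : L, IsCompactElement c → (a ⊔ c) ⊓ (a ⊔ star c) = a)
    (a : L) (ha : a ≠ ⊤)
    (hmi : ∀ x y : L, a = x ⊓ y → a = x ∨ a = y) :
    ∀ x : L, a ≤ x → x = a ∨ x = ⊤ := by
  intro x hax
  by_cases hxa : x = a
  · exact Or.inl hxa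
  · right
    -- find a compact c ≤ x with ¬ c ≤ a
    obtain ⟨s, hs, hsup⟩ := IsCompactlyGenerated.exists_sSup_eq (α := L) x
    have : ∃ c ∈ s, ¬ c ≤ a := by
      by_contra hc
      push_neg at hc
      exact hxa (le_antisymm (hsup ▸ sSup_le hc) hax)
    obtain ⟨c, hcs, hca⟩ := this
    have hcpt := hs c hcs
    have := hmi (a ⊔ c) (a ⊔ star c) (h a c hcpt).symm
    rcases this with h1 | h2
    · exact absurd (le_sup_right.trans h1.ge) hca
    · have hsa : star c ≤ a := le_sup_right.trans h2.ge
      have hcx : c ≤ x := hsup ▸ le_sSup hcs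
      have : (⊤ : L) ≤ x := by
        rw [← hjoin c hcpt]
        exact sup_le hcx (hsa.trans hax)
      exact top_le_iff.mp this
end

section
/- Let L be an algebraic lattice whose join-semilattice of compact elements is dually pseudo-complemented, with greatest element 1. If every completely meet-irreducible element a of L satisfies [a,1] = {a,1}, then a = (a + c) ⊓ (a + c*) for every a ∈ L and every compact c. -/
open CompleteLattice

/-- If every completely meet-irreducible element is a coatom, then
a = (a + c) ⊓ (a + c*) for every a ∈ L and compact c. -/
theorem stmt_10 (L : Type*) [CompleteLattice L] [IsCompactlyGenerated L]
    (star : L → L)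
    (hstar_cpt : ∀ c : L, IsCompactElement c → IsCompactElement (star c))
    (hjoin : ∀ c : L, IsCompactElement c → c ⊔ star c = ⊤)
    (hleast : ∀ c b : L, IsCompactElement c → IsCompactElement b → c ⊔ b = ⊤ → star c ≤ b)
    (h : ∀ a : L, (∀ X : Set L, a = sInf X → a ∈ X) →
      ∀ x : L, a ≤ x → x = a ∨ x = ⊤) :
    ∀ a c : L, IsCompactElement c → (a ⊔ c) ⊓ (a ⊔ star c) = a := by
  classical
  intro a c hc
  refine le_antisymm ?_ (le_inf le_sup_left le_sup_left)
  by_contra hx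
  set x := (a ⊔ c) ⊓ (a ⊔ star c) with hxdef
  -- get a compact d ≤ x with d ≰ a
  obtain ⟨d, hd, hdx, hda⟩ : ∃ d : L, IsCompactElement d ∧ d ≤ x ∧ ¬ d ≤ a := by
    by_contra hcon
    push_neg at hcon
    exact hx (le_iff_compact_le_imp.mpr fun e he hex => hcon e he hex)
  -- Zorn: maximal m ≥ a with d ≰ m
  obtain ⟨m, ham, hmmax⟩ := zorn_le_nonempty₀ {y : L | a ≤ y ∧ ¬ d ≤ y}
    (fun ch hch hchain y hy => by
      refine ⟨sSup ch, ⟨le_trans (hch hy).1 (le_sSup hy), ?_⟩, fun z hz => le_sSup hz⟩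
      intro hdsup
      have hd' := (isCompactElement_iff_le_of_directed_sSup_le L d).mp hd ch ⟨y, hy⟩
        hchain.directedOn hdsup
      obtain ⟨z, hz, hdz⟩ := hd'
      exact (hch hz).2 hdz) a ⟨le_refl a, hda⟩
  have hmS : a ≤ m ∧ ¬ d ≤ m := hmmax.prop
  -- m is completely meet-irreducible
  have hirr : ∀ X : Set L, m = sInf X → m ∈ X := by
    intro X hX
    by_contra hmX
    have : d ≤ sInf X := by
      refine le_sInf fun y hy => ?_
      have hmy : m ≤ y := hX ▸ sInf_le hy
      have hyne : y ≠ m := fun hh => hmX (hh ▸ hy)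
      by_contra hdy
      have : y ∈ {y : L | a ≤ y ∧ ¬ d ≤ y} := ⟨le_trans hmS.1 hmy, hdy⟩
      exact hyne (le_antisymm (hmmax.2 this hmy) hmy)
    exact hmS.2 (hX ▸ this)
  have hcoat := h m hirr
  -- x ≤ m in either case, contradicting d ≰ m
  have hxm : x ≤ m := by
    by_cases hcm : c ≤ m
    · exact le_trans inf_le_left (sup_le (le_trans hmS.1 le_rfl) hcm)
    · -- m ⊔ c = ⊤
      have hmc : m ⊔ c = ⊤ := by
        rcases hcoat (m ⊔ c) le_sup_left with hh | hh
        · exact absurd (hh ▸ le_sup_right) hcm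
        · exact hh
      -- ⊤ is compact
      have htop : IsCompactElement (⊤ : L) := by
        have := isCompactElement_finsetSup ({c, star c} : Finset L)
          (f := id) (by
            intro z hz
            rcases Finset.mem_insert.mp hz with rfl | hz
            · exact hc
            · simpa using Finset.mem_singleton.mp hz ▸ hstar_cpt c hc)
        simpa [Finset.sup_insert, Finset.sup_singleton, hjoin c hc] using this
      -- find compact b ≤ m with c ⊔ b = ⊤
      set S : Set L := {e | IsCompactElement e ∧ e ≤ m} ∪ {c} with hS
      have htopS : (⊤ : L) ≤ sSup S := by
        have h1 : m ≤ sSup S := by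
          conv_lhs => rw [← sSup_compact_le_eq m]
          exact sSup_le_sSup (Set.subset_union_left)
        have h2 : c ≤ sSup S := le_sSup (Set.mem_union_right _ rfl)
        calc (⊤ : L) = m ⊔ c := hmc.symm
          _ ≤ sSup S := sup_le h1 h2
      obtain ⟨t, htS, htsup⟩ := (isCompactElement_iff_exists_le_sSup_of_le_sSup L ⊤).mp htop S htopS
      set b := (t.filter (· ≤ m)).sup id with hb
      have hbm : b ≤ m := Finset.sup_le fun e he => (Finset.mem_filter.mp he).2
      have hbcpt : IsCompactElement b := by
        refine isCompactElement_finsetSup _ fun e he => ?_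
        have he' := Finset.mem_filter.mp he
        rcases htS he'.1 with hcase | hcase
        · exact hcase.1
        · exact absurd (Set.mem_singleton_iff.mp hcase ▸ he'.2) hcm
      have hbc : c ⊔ b = ⊤ := by
        refine top_le_iff.mp ?_
        refine le_trans htsup (Finset.sup_le fun e he => ?_)
        rcases htS he with hcase | hcase
        · have hmem : e ∈ t.filter (· ≤ m) := Finset.mem_filter.mpr ⟨he, hcase.2⟩
          exact le_trans (Finset.le_sup (f := id) hmem) le_sup_right
        · exact Set.mem_singleton_iff.mp hcase ▸ le_sup_left
      have hsb : star c ≤ m := le_trans (hleast c b hc hbcpt hbc) hbm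
      exact le_trans inf_le_right (sup_le hmS.1 hsb)
  exact hmS.2 (le_trans hdx hxm)
end

section
/- In a rigorously compact De Morgan monoid A with least element ⊥ and greatest element ⊤, the singleton {⊥} is an equivalence class of every proper congruence of A; equivalently, if a congruence θ identifies ⊥ with some element a ≠ ⊥, then θ = A × A. -/
/-- A De Morgan monoid: a distributive lattice and a square-increasing commutative
monoid with an involution ¬ satisfying x·y ≤ z ⟺ x·¬z ≤ ¬y. -/
class DeMorganMonoid (A : Type*) extends DistribLattice A, CommMonoid A where
  neg : A → A
  square_increasing : ∀ x : A, x ≤ x * x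
  neg_neg : ∀ x : A, neg (neg x) = x
  contra : ∀ x y z : A, x * y ≤ z ↔ x * neg z ≤ neg y

open DeMorganMonoid

/-- A congruence of a De Morgan monoid. -/
structure IsDMMCongruence {A : Type*} [DeMorganMonoid A] (r : A → A → Prop) : Prop where
  refl : ∀ x, r x x
  symm : ∀ {x y}, r x y → r y x
  trans : ∀ {x y z}, r x y → r y z → r x z
  mul_compat : ∀ {x y u v}, r x y → r u v → r (x * u) (y * v)
  inf_compat : ∀ {x y u v}, r x y → r u v → r (x ⊓ u) (y ⊓ v)
  sup_compat : ∀ {x y u v}, r x y → r u v → r (x ⊔ u) (y ⊔ v)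
  neg_compat : ∀ {x y}, r x y → r (neg x) (neg y)

/-- In a rigorously compact De Morgan monoid, {⊥} is a class of every proper
congruence: a congruence identifying ⊥ with some a ≠ ⊥ is the total relation. -/
theorem stmt_15 (A : Type*) [DeMorganMonoid A] [OrderBot A] [OrderTop A]
    (hrc : ∀ a : A, a ≠ ⊥ → a * ⊤ = ⊤)
    (θ : A → A → Prop) (hθ : IsDMMCongruence θ)
    (a : A) (ha : a ≠ ⊥) (hba : θ ⊥ a) :
    ∀ x y : A, θ x y := by
  have anti : ∀ y z : A, y ≤ z ↔ neg z ≤ neg y := by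
    intro y z
    simpa using contra (1 : A) y z
  have ntop : neg (⊥ : A) = ⊤ := by
    refine le_antisymm le_top ?_
    have := (anti ⊥ (neg ⊤)).mp bot_le
    rwa [DeMorganMonoid.neg_neg] at this
  have botmul : (⊥ : A) * ⊤ = ⊥ := by
    have h : (⊤ : A) * ⊥ ≤ ⊥ := by
      rw [contra, ntop]; exact le_top
    rw [mul_comm] at h
    exact le_antisymm h bot_le
  have htop : θ ⊥ ⊤ := by
    have := hθ.mul_compat hba (hθ.refl ⊤)
    rwa [botmul, hrc a ha] at this
  have hbot : ∀ x : A, θ ⊥ x := by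
    intro x
    have := hθ.inf_compat htop (hθ.refl x)
    simpa using this
  intro x y
  exact hθ.trans (hθ.symm (hbot x)) (hbot y)
end

section
/- Let A be a nontrivial De Morgan monoid with least element ⊥ which is rigorously compact and in which {⊥} is an equivalence class of every proper congruence. If a ∧ b = ⊥ with a, b ≤ e, then a = ⊥ or b = ⊥; i.e., ⊥ is meet-irreducible in the sublattice (e] = {x : x ≤ e}. -/
open DeMorganMonoid

section Aux
variable {A : Type*} [DeMorganMonoid A]

lemma dmm_neg_antitone {x y : A} (h : x ≤ y) : neg y ≤ neg x := by
  have := (contra 1 x y).mp (by simpa using h)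
  simpa using this

lemma dmm_le_neg_comm {x y : A} : x ≤ neg y ↔ y ≤ neg x := by
  constructor
  · intro h
    have := dmm_neg_antitone h
    rwa [DeMorganMonoid.neg_neg] at this
  · intro h
    have := dmm_neg_antitone h
    rwa [DeMorganMonoid.neg_neg] at this

lemma dmm_mul_le_mul_right {x y z : A} (h : y ≤ z) : x * y ≤ x * z := by
  have h1 : x * neg (x * z) ≤ neg z := (contra x z (x * z)).mp le_rfl
  exact (contra x y (x * z)).mpr (h1.trans (dmm_neg_antitone h))

lemma dmm_res {x y z : A} : x * y ≤ z ↔ y ≤ neg (x * neg z) := by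
  rw [contra, dmm_le_neg_comm]

end Aux

/-- In a nontrivial rigorously compact De Morgan monoid in which {⊥} is a class of
every proper congruence, ⊥ is meet-irreducible in the sublattice (e]. -/
theorem stmt_16 (A : Type*) [DeMorganMonoid A] [OrderBot A] [OrderTop A] [Nontrivial A]
    (hrc : ∀ a : A, a ≠ ⊥ → a * ⊤ = ⊤)
    (hclass : ∀ θ : A → A → Prop, IsDMMCongruence θ → (∃ x y : A, ¬ θ x y) →
      ∀ a : A, θ ⊥ a → a = ⊥)
    (a b : A) (hab : a ⊓ b = ⊥) (hae : a ≤ 1) (hbe : b ≤ 1) :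
    a = ⊥ ∨ b = ⊥ := by
  by_cases ha : a = ⊥
  · exact Or.inl ha
  right
  -- the congruence generated by identifying a with 1
  set θ : A → A → Prop := fun x y => a * x ≤ y ∧ a * y ≤ x with hθ
  have hax : ∀ x : A, a * x ≤ x := fun x => by
    calc a * x ≤ 1 * x := by
          have := dmm_mul_le_mul_right (x := x) hae
          simpa [mul_comm] using this
    _ = x := one_mul x
  have haa : ∀ x y : A, a * x ≤ y → a * (a * x) ≤ a * y := fun x y h =>
    dmm_mul_le_mul_right h
  have hsq : ∀ x : A, a * x ≤ a * (a * x) := fun x => by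
    calc a * x ≤ (a * a) * x := by
          have := dmm_mul_le_mul_right (x := x) (square_increasing a)
          simpa [mul_comm] using this
    _ = a * (a * x) := mul_assoc a a x
  have hcong : IsDMMCongruence θ := by
    constructor
    · intro x; exact ⟨hax x, hax x⟩
    · intro x y h; exact ⟨h.2, h.1⟩
    · intro x y z h1 h2
      exact ⟨(hsq x).trans ((haa _ _ h1.1).trans h2.1),
             (hsq z).trans ((haa _ _ h2.2).trans h1.2)⟩
    · intro x y u v h1 h2
      constructor
      · calc a * (x * u) ≤ (a * a) * (x * u) := by
              have := dmm_mul_le_mul_right (x := x * u) (square_increasing a)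
              simpa [mul_comm] using this
        _ = (a * x) * (a * u) := mul_mul_mul_comm a a x u
        _ ≤ y * (a * u) := by
              have := dmm_mul_le_mul_right (x := a * u) h1.1
              simpa [mul_comm] using this
        _ ≤ y * v := dmm_mul_le_mul_right h2.1
      · calc a * (y * v) ≤ (a * a) * (y * v) := by
              have := dmm_mul_le_mul_right (x := y * v) (square_increasing a)
              simpa [mul_comm] using this
        _ = (a * y) * (a * v) := mul_mul_mul_comm a a y v
        _ ≤ x * (a * v) := by
              have := dmm_mul_le_mul_right (x := a * v) h1.2
              simpa [mul_comm] using this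
        _ ≤ x * u := dmm_mul_le_mul_right h2.2
    · intro x y u v h1 h2
      exact ⟨le_inf ((dmm_mul_le_mul_right inf_le_left).trans h1.1)
              ((dmm_mul_le_mul_right inf_le_right).trans h2.1),
             le_inf ((dmm_mul_le_mul_right inf_le_left).trans h1.2)
              ((dmm_mul_le_mul_right inf_le_right).trans h2.2)⟩
    · intro x y u v h1 h2
      constructor
      · rw [dmm_res]
        exact sup_le (dmm_res.mp (h1.1.trans le_sup_left))
          (dmm_res.mp (h2.1.trans le_sup_right))
      · rw [dmm_res]
        exact sup_le (dmm_res.mp (h1.2.trans le_sup_left))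
          (dmm_res.mp (h2.2.trans le_sup_right))
    · intro x y h
      exact ⟨(contra a y x).mp h.2, (contra a x y).mp h.1⟩
  have hbotne : (⊥ : A) ≠ ⊤ := by
    intro h
    obtain ⟨x, y, hxy⟩ := exists_pair_ne A
    have hb : ∀ z : A, z = ⊥ := fun z => le_antisymm (le_top.trans h.ge) bot_le
    exact hxy ((hb x).trans (hb y).symm)
  have hproper : ∃ x y : A, ¬ θ x y := by
    refine ⟨⊤, ⊥, fun h => ?_⟩
    have : a * ⊤ ≤ ⊥ := h.1
    rw [hrc a ha] at this
    exact hbotne (le_antisymm bot_le this)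
  have hnegbot : neg (⊥ : A) = ⊤ := by
    apply le_antisymm le_top
    rw [← DeMorganMonoid.neg_neg (⊤ : A), dmm_le_neg_comm, DeMorganMonoid.neg_neg]
    exact bot_le
  have hmulbot : a * ⊥ ≤ ⊥ := by
    rw [contra, hnegbot]
    rw [hrc a ha]
  have hθb : θ ⊥ b := by
    constructor
    · exact hmulbot.trans bot_le
    · rw [← hab]
      exact le_inf (by
        have := dmm_mul_le_mul_right (x := a) hbe
        simpa using this) (hax b)
  exact hclass θ hcong hproper b hθb
end

section
/- An idempotent De Morgan monoid (one satisfying x·x = x for all x) satisfies f ≤ e, where f := ¬e. Conversely, a De Morgan monoid satisfying f ≤ e is idempotent. -/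
open DeMorganMonoid

/-- Negation is antitone. -/
lemma dmm_neg_antitone_s19 {A : Type*} [DeMorganMonoid A] {a b : A} (h : a ≤ b) :
    neg b ≤ neg a := by
  have := (contra (1 : A) a b).mp (by rwa [one_mul])
  rwa [one_mul] at this

/-- Multiplication is monotone in the right argument. -/
lemma dmm_mul_le_mul_left {A : Type*} [DeMorganMonoid A] (a : A) {b c : A} (h : b ≤ c) :
    a * b ≤ a * c := by
  have h1 : a * neg (a * c) ≤ neg c := (contra a c (a * c)).mp le_rfl
  exact (contra a b (a * c)).mpr (h1.trans (dmm_neg_antitone_s19 h))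

/-- x · ¬x ≤ ¬1. -/
lemma dmm_mul_neg_self_le {A : Type*} [DeMorganMonoid A] (x : A) :
    x * neg x ≤ neg 1 := (contra x 1 x).mp (by rw [mul_one])

/-- A De Morgan monoid is idempotent iff f ≤ e, where f = ¬e. -/
theorem stmt_19 (A : Type*) [DeMorganMonoid A] :
    (∀ x : A, x * x = x) ↔ neg (1 : A) ≤ 1 := by
  constructor
  · intro h
    have h1 : neg (1 : A) * neg (1 : A) ≤ neg (1 : A) := (h _).le
    have h2 := (contra (neg (1 : A)) (neg (1 : A)) (neg (1 : A))).mp h1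
    rwa [DeMorganMonoid.neg_neg, mul_one] at h2
  · intro hf x
    refine le_antisymm ?_ (square_increasing x)
    -- x · ¬x ≤ 1
    have h1 : x * neg x ≤ 1 := (dmm_mul_neg_self_le x).trans hf
    -- x · ¬x ≤ ¬x
    have h2 : x * neg x ≤ neg x := by
      calc x * neg x ≤ x * (neg x * neg x) :=
            dmm_mul_le_mul_left x (square_increasing (neg x))
        _ = (x * neg x) * neg x := by rw [mul_assoc]
        _ ≤ 1 * neg x := by
            rw [mul_comm (x * neg x) (neg x), mul_comm 1 (neg x)]
            exact dmm_mul_le_mul_left (neg x) h1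
        _ = neg x := one_mul _
    exact (contra x x x).mpr h2
end
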